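/- Let V : ℝ³ → ℂ be continuously differentiable with compact support, and let x, y ∈ ℝ³. Set c = |x−y|/2, d = diam(supp V), and δ = dist([x,y], supp V), where [x,y] is the segment joining x and y. Then ∫_c^∞ (sup_{z ∈ E(x,y,r)} |∇V(z)|) · r dr/√(r²−c²) ≤ ‖∇V‖_∞ · (c + d), where E(x,y,r) = { z ∈ ℝ³ : |z−x| + |z−y| = 2r }. (Indeed V vanishes on E(x,y,r) whenever r < √(c²+δ²) or r > c + d + δ.) -/

import Mathlib

open MeasureTheory Real

noncomputable section

abbrev R3 := EuclideanSpace ℝ (Fin 3)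

open RealInnerProductSpace

lemma segment_compact (x y : R3) : IsCompact (segment ℝ x y) := by
  rw [segment_eq_image']
  exact isCompact_Icc.image (by continuity)

lemma ellipsoid_infDist_le (x y z : R3) (c r : ℝ)
    (hc : c = ‖x - y‖ / 2) (hz : ‖z - x‖ + ‖z - y‖ = 2 * r) :
    Metric.infDist z (segment ℝ x y) ≤ Real.sqrt (r ^ 2 - c ^ 2) := by
  have hc0 : 0 ≤ c := by rw [hc]; positivity
  have hxy : ‖x - y‖ = 2 * c := by rw [hc]; ring
  have hcr : c ≤ r := by
    have h1 : ‖(z - y) - (z - x)‖ ≤ ‖z - y‖ + ‖z - x‖ := norm_sub_le _ _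
    have h2 : (z - y) - (z - x) = x - y := by abel
    rw [h2] at h1
    rw [hxy] at h1
    linarith
  rcases eq_or_lt_of_le hc0 with hceq | hcpos
  · -- c = 0, x = y
    have hxyeq : x = y := by
      have : ‖x - y‖ = 0 := by rw [hxy, ← hceq]; ring
      rwa [norm_sub_eq_zero_iff] at this
    subst hxyeq
    rw [segment_same, Metric.infDist_singleton, dist_eq_norm]
    have hzx : ‖z - x‖ = r := by linarith
    rw [hzx, ← hceq]
    rw [show r ^ 2 - 0 ^ 2 = r ^ 2 by ring, Real.sqrt_sq (by linarith : (0:ℝ) ≤ r)]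
  · -- c > 0
    set A := ‖z - x‖ with hA
    set B := ‖z - y‖ with hBd
    set s := ⟪z - x, y - x⟫ with hs
    have hyx : ‖y - x‖ = 2 * c := by rw [norm_sub_rev]; exact hxy
    have hB2 : B ^ 2 = A ^ 2 - 2 * s + (2 * c) ^ 2 := by
      have h2 : z - y = (z - x) - (y - x) := by abel
      rw [hBd, h2, norm_sub_sq_real, hyx]
    have hA0 : 0 ≤ A := norm_nonneg _
    have hB0 : 0 ≤ B := norm_nonneg _
    have hr : 0 < r := lt_of_lt_of_le hcpos hcr
    have hw : 0 ≤ r ^ 2 - c ^ 2 := by nlinarith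
    have hBeq : B = 2 * r - A := by linarith
    rw [hBeq] at hB2
    have hAr : 2 * r * A = 2 * (r ^ 2 - c ^ 2) + s := by nlinarith [hB2]
    rcases le_or_gt s 0 with hsle | hspos
    · refine le_trans (Metric.infDist_le_dist_of_mem (left_mem_segment ℝ x y)) ?_
      rw [dist_eq_norm]
      have hA2 : 4 * r ^ 2 * A ^ 2 = (2 * (r ^ 2 - c ^ 2) + s) ^ 2 := by
        linear_combination (2 * r * A + (2 * (r ^ 2 - c ^ 2) + s)) * hAr
      have h1 : A ^ 2 ≤ r ^ 2 - c ^ 2 := by nlinarith [sq_nonneg c, mul_nonneg hA0 hr.le]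
      calc A = Real.sqrt (A ^ 2) := (Real.sqrt_sq hA0).symm
        _ ≤ Real.sqrt (r ^ 2 - c ^ 2) := Real.sqrt_le_sqrt h1
    · rcases le_or_gt (4 * c ^ 2) s with hs4 | hs4
      · refine le_trans (Metric.infDist_le_dist_of_mem (right_mem_segment ℝ x y)) ?_
        rw [dist_eq_norm]
        have hBr : 2 * r * B = 2 * (r ^ 2 - c ^ 2) + (4 * c ^ 2 - s) := by
          rw [hBeq]; linear_combination -hAr
        have hB2' : 4 * r ^ 2 * B ^ 2 = (2 * (r ^ 2 - c ^ 2) + (4 * c ^ 2 - s)) ^ 2 := by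
          linear_combination (2 * r * B + (2 * (r ^ 2 - c ^ 2) + (4 * c ^ 2 - s))) * hBr
        have h1 : B ^ 2 ≤ r ^ 2 - c ^ 2 := by
          nlinarith [sq_nonneg c, mul_nonneg hB0 hr.le]
        calc B = Real.sqrt (B ^ 2) := (Real.sqrt_sq hB0).symm
          _ ≤ Real.sqrt (r ^ 2 - c ^ 2) := Real.sqrt_le_sqrt h1
      · -- interior case
        set t : ℝ := s / (4 * c ^ 2) with htd
        have hc2 : (0:ℝ) < 4 * c ^ 2 := by positivity
        have ht : t * (4 * c ^ 2) = s := div_mul_cancel₀ s hc2.ne'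
        have ht0 : 0 ≤ t := by positivity
        have ht1 : t ≤ 1 := by rw [htd]; rw [div_le_one hc2]; linarith
        set p := x + t • (y - x) with hp
        have hpseg : p ∈ segment ℝ x y := by
          rw [segment_eq_image']
          exact ⟨t, ⟨ht0, ht1⟩, rfl⟩
        refine le_trans (Metric.infDist_le_dist_of_mem hpseg) ?_
        rw [dist_eq_norm]
        have hzp : z - p = (z - x) - t • (y - x) := by rw [hp, sub_add_eq_sub_sub]
        have hexp : ‖z - p‖ ^ 2 = A ^ 2 - 2 * (t * s) + t ^ 2 * (2 * c) ^ 2 := by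
          rw [hzp, norm_sub_sq_real, real_inner_smul_right, norm_smul, ← hs, ← hA]
          rw [mul_pow, hyx]
          try rw [Real.norm_eq_abs, sq_abs]
          try ring
        have hA2 : 4 * r ^ 2 * A ^ 2 = (2 * (r ^ 2 - c ^ 2) + s) ^ 2 := by
          linear_combination (2 * r * A + (2 * (r ^ 2 - c ^ 2) + s)) * hAr
        have hA2c : 4 * r ^ 2 * c ^ 2 * A ^ 2 = c ^ 2 * (2 * (r ^ 2 - c ^ 2) + s) ^ 2 := by
          linear_combination c ^ 2 * hA2
        have htsr : r ^ 2 * (t * s) * (4 * c ^ 2) = r ^ 2 * s ^ 2 := by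
          linear_combination r ^ 2 * s * ht
        have htt4 : 4 * r ^ 2 * c ^ 2 * (t ^ 2 * (2 * c) ^ 2) = 4 * r ^ 2 * c ^ 2 * (t * s) := by
          linear_combination 4 * r ^ 2 * c ^ 2 * t * ht
        have hEq : 4 * r ^ 2 * c ^ 2 * (r ^ 2 - c ^ 2)
            - 4 * r ^ 2 * c ^ 2 * (A ^ 2 - 2 * (t * s) + t ^ 2 * (2 * c) ^ 2)
            = (r ^ 2 - c ^ 2) * (s - 2 * c ^ 2) ^ 2 := by
          linear_combination (-1 : ℝ) * hA2c + htsr + (-1 : ℝ) * htt4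
        have hpos4 : (0:ℝ) < 4 * r ^ 2 * c ^ 2 := by positivity
        have hq : 4 * r ^ 2 * c ^ 2 * (A ^ 2 - 2 * (t * s) + t ^ 2 * (2 * c) ^ 2)
            ≤ 4 * r ^ 2 * c ^ 2 * (r ^ 2 - c ^ 2) := by
          have hN : 0 ≤ (r ^ 2 - c ^ 2) * (s - 2 * c ^ 2) ^ 2 :=
            mul_nonneg hw (sq_nonneg _)
          linarith [hEq]
        have key : ‖z - p‖ ^ 2 ≤ r ^ 2 - c ^ 2 := by
          rw [hexp]
          exact le_of_mul_le_mul_left hq hpos4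
        calc ‖z - p‖ = Real.sqrt (‖z - p‖ ^ 2) := (Real.sqrt_sq (norm_nonneg _)).symm
          _ ≤ Real.sqrt (r ^ 2 - c ^ 2) := Real.sqrt_le_sqrt key

/-- For a compactly supported `C¹` potential, the ellipsoid integral
`∫_c^∞ (sup_{E(x,y,r)} |∇V|) r dr/√(r²−c²)` is bounded by `‖∇V‖_∞ (c + d)`,
where `c = |x−y|/2` and `d = diam(supp V)`. -/
theorem ellipsoid_integral_bound_compact_support
    (V : R3 → ℂ) (hV : ContDiff ℝ 1 V) (hsupp : HasCompactSupport V)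
    (x y : R3) (c d : ℝ)
    (hc : c = ‖x - y‖ / 2) (hd : d = Metric.diam (Function.support V)) :
    (∫ r in Set.Ioi c,
        (⨆ z ∈ {w : R3 | ‖w - x‖ + ‖w - y‖ = 2 * r}, ‖fderiv ℝ V z‖) *
          r / Real.sqrt (r ^ 2 - c ^ 2))
      ≤ (⨆ w : R3, ‖fderiv ℝ V w‖) * (c + d) := by
  set M : ℝ := ⨆ w : R3, ‖fderiv ℝ V w‖ with hM
  set S : ℝ → ℝ :=
    fun r => ⨆ z ∈ {w : R3 | ‖w - x‖ + ‖w - y‖ = 2 * r}, ‖fderiv ℝ V z‖ with hSdef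
  have hfd_cont : Continuous fun w : R3 => ‖fderiv ℝ V w‖ :=
    (hV.continuous_fderiv one_ne_zero).norm
  have hfd_supp : HasCompactSupport fun w : R3 => ‖fderiv ℝ V w‖ :=
    (hsupp.fderiv (𝕜 := ℝ)).norm
  have hbdd : BddAbove (Set.range fun w : R3 => ‖fderiv ℝ V w‖) :=
    hfd_cont.bddAbove_range_of_hasCompactSupport hfd_supp
  have hM0 : 0 ≤ M := Real.iSup_nonneg fun w => norm_nonneg _
  have hMle : ∀ w : R3, ‖fderiv ℝ V w‖ ≤ M := fun w => le_ciSup hbdd w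
  have hc0 : 0 ≤ c := by rw [hc]; positivity
  have hd0 : 0 ≤ d := hd ▸ Metric.diam_nonneg
  have hS0 : ∀ r, 0 ≤ S r := fun r =>
    Real.iSup_nonneg fun z => Real.iSup_nonneg fun _ => norm_nonneg _
  have hSle : ∀ r, S r ≤ M := fun r =>
    Real.iSup_le (fun z => Real.iSup_le (fun _ => hMle z) hM0) hM0
  have hSzero : ∀ r, (∀ z : R3, ‖z - x‖ + ‖z - y‖ = 2 * r → fderiv ℝ V z = 0) →
      S r = 0 := by
    intro r h
    refine le_antisymm (Real.iSup_le (fun z => Real.iSup_le (fun hz => ?_) le_rfl) le_rfl)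
      (hS0 r)
    rw [h z hz]; simp
  by_cases hK : tsupport V = ∅
  · have hzero : ∀ r, S r = 0 := by
      intro r
      apply hSzero
      intro z _
      by_contra h
      have : z ∈ tsupport V := support_fderiv_subset ℝ (Function.mem_support.2 h)
      rw [hK] at this
      exact this
    have : ∀ r : ℝ, S r * r / Real.sqrt (r ^ 2 - c ^ 2) = 0 := by
      intro r; rw [hzero r]; ring
    calc (∫ r in Set.Ioi c, S r * r / Real.sqrt (r ^ 2 - c ^ 2))
        = ∫ _ in Set.Ioi c, (0:ℝ) := by
          exact integral_congr_ae (Filter.Eventually.of_forall fun r => this r)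
      _ = 0 := integral_zero _ _
      _ ≤ M * (c + d) := mul_nonneg hM0 (add_nonneg hc0 hd0)
  · have hKne : (tsupport V).Nonempty := Set.nonempty_iff_ne_empty.2 hK
    have hKcomp : IsCompact (tsupport V) := hsupp
    have hsegne : (segment ℝ x y).Nonempty := ⟨x, left_mem_segment ℝ x y⟩
    have hsegcomp : IsCompact (segment ℝ x y) := segment_compact x y
    obtain ⟨w₀, hw₀K, hw₀min⟩ := hKcomp.exists_isMinOn hKne
      ((Metric.continuous_infDist_pt (segment ℝ x y)).continuousOn)
    rw [isMinOn_iff] at hw₀min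
    set δ := Metric.infDist w₀ (segment ℝ x y) with hδ
    have hδ0 : 0 ≤ δ := Metric.infDist_nonneg
    set a := Real.sqrt (c ^ 2 + δ ^ 2) with ha
    set b := c + d + δ with hb
    have hb0 : 0 ≤ b := by positivity
    have haca : a ≤ c + δ := by
      rw [ha]
      calc Real.sqrt (c ^ 2 + δ ^ 2) ≤ Real.sqrt ((c + δ) ^ 2) :=
            Real.sqrt_le_sqrt (by nlinarith [mul_nonneg hc0 hδ0])
        _ = c + δ := Real.sqrt_sq (by positivity)
    have hab : a ≤ b := by linarith
    have hac : c ≤ a := by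
      rw [ha]
      calc c = Real.sqrt (c ^ 2) := (Real.sqrt_sq hc0).symm
        _ ≤ Real.sqrt (c ^ 2 + δ ^ 2) := Real.sqrt_le_sqrt (by nlinarith)
    have hdK : Metric.diam (tsupport V) = d := by
      rw [hd, tsupport, Metric.diam_closure]
    -- vanishing outside [a, b]
    have hvanish : ∀ r ∈ Set.Ioi c, r ∉ Set.Icc a b → S r = 0 := by
      intro r hr hrab
      apply hSzero
      intro z hz
      by_contra hne
      have hzK : z ∈ tsupport V := support_fderiv_subset ℝ (Function.mem_support.2 hne)
      have hdistlow : δ ≤ Metric.infDist z (segment ℝ x y) := hw₀min z hzK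
      have hG2 : Metric.infDist z (segment ℝ x y) ≤ Real.sqrt (r ^ 2 - c ^ 2) :=
        ellipsoid_infDist_le x y z c r hc hz
      rw [Set.mem_Icc, not_and_or] at hrab
      rcases hrab with hra | hrb
      · push_neg at hra
        have hr0 : 0 ≤ r := le_trans hc0 (le_of_lt hr)
        have hrc : c < r := hr
        have hlow : r ^ 2 - c ^ 2 < δ ^ 2 := by
          have h1 : r ^ 2 < c ^ 2 + δ ^ 2 := by
            nlinarith [Real.sq_sqrt (show (0:ℝ) ≤ c ^ 2 + δ ^ 2 by positivity),
              Real.sqrt_nonneg (c ^ 2 + δ ^ 2)]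
          linarith
        have : Real.sqrt (r ^ 2 - c ^ 2) < δ := by
          calc Real.sqrt (r ^ 2 - c ^ 2) < Real.sqrt (δ ^ 2) :=
                Real.sqrt_lt_sqrt (by nlinarith) hlow
            _ = δ := Real.sqrt_sq hδ0
        linarith
      · push_neg at hrb
        obtain ⟨p, hpseg, hpd⟩ := hsegcomp.exists_infDist_eq_dist hsegne z
        have hpxy : dist x p + dist p y = dist x y := dist_add_dist_of_mem_segment hpseg
        have h1 : ‖z - x‖ ≤ dist z p + dist p x := by
          rw [← dist_eq_norm]; exact dist_triangle z p x
        have h2 : ‖z - y‖ ≤ dist z p + dist p y := by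
          rw [← dist_eq_norm]; exact dist_triangle z p y
        have hxy2c : dist x y = 2 * c := by rw [dist_eq_norm, hc]; ring
        have hpx : dist p x = dist x p := dist_comm p x
        have hinfd : Metric.infDist z (segment ℝ x y) ≤ d + δ := by
          calc Metric.infDist z (segment ℝ x y)
              ≤ Metric.infDist w₀ (segment ℝ x y) + dist z w₀ :=
                Metric.infDist_le_infDist_add_dist
            _ ≤ d + δ := by
                have : dist z w₀ ≤ Metric.diam (tsupport V) :=
                  Metric.dist_le_diam_of_mem hKcomp.isBounded hzK hw₀K
                rw [hdK] at this
                linarith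
        have hup : 2 * r ≤ 2 * Metric.infDist z (segment ℝ x y) + 2 * c := by
          rw [← hz]
          have := hpxy
          rw [hpd]
          linarith
        linarith
    -- the comparison function
    set f : ℝ → ℝ := fun r => M * (r / Real.sqrt (r ^ 2 - c ^ 2)) with hf
    set F : ℝ → ℝ := fun r => M * Real.sqrt (r ^ 2 - c ^ 2) with hF
    have hFderiv : ∀ r ∈ Set.Ioo a b, HasDerivAt F (f r) r := by
      intro r hr
      have hrc : c < r := lt_of_le_of_lt hac hr.1
      have hpos : 0 < r ^ 2 - c ^ 2 := by nlinarith
      have h1 : HasDerivAt (fun r : ℝ => r ^ 2 - c ^ 2) (2 * r) r := by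
        simpa using (hasDerivAt_pow 2 r).sub_const (c ^ 2)
      have h2 : HasDerivAt (fun r : ℝ => Real.sqrt (r ^ 2 - c ^ 2))
          (1 / (2 * Real.sqrt (r ^ 2 - c ^ 2)) * (2 * r)) r :=
        (Real.hasDerivAt_sqrt hpos.ne').comp r h1
      have hsq : Real.sqrt (r ^ 2 - c ^ 2) ≠ 0 := by
        positivity
      have h3 : 1 / (2 * Real.sqrt (r ^ 2 - c ^ 2)) * (2 * r)
          = r / Real.sqrt (r ^ 2 - c ^ 2) := by
        field_simp
      rw [h3] at h2
      simpa [hF, hf] using h2.const_mul M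
    have hfnonneg : ∀ r ∈ Set.Ioo a b, 0 ≤ f r := by
      intro r hr
      have hrc : c < r := lt_of_le_of_lt hac hr.1
      have hr0 : 0 ≤ r := le_trans hc0 hrc.le
      exact mul_nonneg hM0 (div_nonneg hr0 (Real.sqrt_nonneg _))
    have hFcont : ContinuousOn F (Set.Icc a b) :=
      (continuous_const.mul (Real.continuous_sqrt.comp
        ((continuous_pow 2).sub continuous_const))).continuousOn
    have hintIoc : IntegrableOn f (Set.Ioc a b) volume :=
      intervalIntegral.integrableOn_deriv_of_nonneg hFcont hFderiv hfnonneg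
    have hintIcc : IntegrableOn f (Set.Icc a b) volume := by
      rwa [integrableOn_Icc_iff_integrableOn_Ioc]
    have hfint : IntervalIntegrable f volume a b := by
      rw [intervalIntegrable_iff_integrableOn_Icc_of_le hab]
      exact hintIcc
    have hcalc : ∫ r in a..b, f r = F b - F a :=
      intervalIntegral.integral_eq_sub_of_hasDeriv_right_of_le hab hFcont
        (fun r hr => (hFderiv r hr).hasDerivWithinAt) hfint
    -- bound the integral
    have hmono : (∫ r in Set.Ioi c, S r * r / Real.sqrt (r ^ 2 - c ^ 2))
        ≤ ∫ r in Set.Ioi c, (Set.Icc a b).indicator f r := by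
      apply integral_mono_of_nonneg
      · rw [Filter.EventuallyLE, ae_restrict_iff' measurableSet_Ioi]
        refine Filter.Eventually.of_forall fun r hr => ?_
        have hr0 : 0 ≤ r := le_trans hc0 (le_of_lt hr)
        exact div_nonneg (mul_nonneg (hS0 r) hr0) (Real.sqrt_nonneg _)
      · exact (hintIcc.integrable_indicator measurableSet_Icc).restrict
      · rw [Filter.EventuallyLE, ae_restrict_iff' measurableSet_Ioi]
        refine Filter.Eventually.of_forall fun r hr => ?_
        by_cases hmem : r ∈ Set.Icc a b
        · rw [Set.indicator_of_mem hmem]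
          have hrc : c < r := hr
          have hr0 : 0 ≤ r := le_trans hc0 hrc.le
          have hsq0 : 0 < Real.sqrt (r ^ 2 - c ^ 2) := by
            apply Real.sqrt_pos.2; nlinarith
          have h1 : S r * r ≤ M * r := mul_le_mul_of_nonneg_right (hSle r) hr0
          calc S r * r / Real.sqrt (r ^ 2 - c ^ 2)
              ≤ M * r / Real.sqrt (r ^ 2 - c ^ 2) := by gcongr
            _ = f r := by simp only [hf]; ring
        · rw [Set.indicator_of_notMem hmem, hvanish r hr hmem]
          simp
    have h1 : ((Set.Icc a b ∩ Set.Ioi c) \ Set.Ioc a b : Set ℝ) ⊆ {a} := by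
      intro u hu
      obtain ⟨⟨⟨hua, hub⟩, _⟩, hnot⟩ := hu
      rw [Set.mem_Ioc] at hnot
      push_neg at hnot
      have : u ≤ a := by
        by_contra hcon
        push_neg at hcon
        exact absurd (hnot hcon) (not_lt.2 hub)
      exact Set.mem_singleton_iff.2 (le_antisymm this hua)
    have h2 : (Set.Ioc a b \ (Set.Icc a b ∩ Set.Ioi c) : Set ℝ) = ∅ := by
      rw [Set.diff_eq_empty]
      intro u hu
      rw [Set.mem_Ioc] at hu
      exact ⟨⟨le_of_lt hu.1, hu.2⟩, lt_of_le_of_lt hac hu.1⟩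
    have hsetae : (Set.Icc a b ∩ Set.Ioi c : Set ℝ) =ᵐ[volume] Set.Ioc a b := by
      rw [MeasureTheory.ae_eq_set]
      constructor
      · exact measure_mono_null h1 (Real.volume_singleton)
      · rw [h2]; simp
    have hindic : (∫ r in Set.Ioi c, (Set.Icc a b).indicator f r)
        = ∫ r in Set.Ioc a b, f r := by
      rw [MeasureTheory.integral_indicator measurableSet_Icc,
        Measure.restrict_restrict measurableSet_Icc,
        Measure.restrict_congr_set hsetae]
    have hFa : F a = M * δ := by
      have h3 : a ^ 2 - c ^ 2 = δ ^ 2 := by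
        rw [ha, Real.sq_sqrt (by positivity : (0:ℝ) ≤ c ^ 2 + δ ^ 2)]; ring
      simp only [hF]
      rw [h3, Real.sqrt_sq hδ0]
    have hFb : F b ≤ M * b := by
      have h4 : Real.sqrt (b ^ 2 - c ^ 2) ≤ b := by
        calc Real.sqrt (b ^ 2 - c ^ 2) ≤ Real.sqrt (b ^ 2) :=
              Real.sqrt_le_sqrt (by nlinarith)
          _ = b := Real.sqrt_sq hb0
      simp only [hF]
      exact mul_le_mul_of_nonneg_left h4 hM0
    calc (∫ r in Set.Ioi c, S r * r / Real.sqrt (r ^ 2 - c ^ 2))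
        ≤ ∫ r in Set.Ioi c, (Set.Icc a b).indicator f r := hmono
      _ = ∫ r in Set.Ioc a b, f r := hindic
      _ = ∫ r in a..b, f r := (intervalIntegral.integral_of_le hab).symm
      _ = F b - F a := hcalc
      _ ≤ M * b - M * δ := by linarith
      _ = M * (c + d) := by rw [hb]; ring
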